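/- Let k ≥ 3, let b_k = 2^{k-1} - a_{k-2} + 1, and let 0 ≤ u ≤ 2^{k-1} - b_k. Then deg(B_{b_k + u}) = deg(B_{a_{k-1} + u}) + 1 and deg(B_{2^k - (b_k + u)}) = deg(B_{a_{k-1} + u}) + 1. -/
import Mathlib


open Polynomial in
/-- The Stern polynomial: `B 0 = 0`, `B 1 = 1`, `B (2n) = t * B n`, `B (2n+1) = B n + B (n+1)`. -/
noncomputable def sternP : ℕ → Polynomial ℕ
  | 0 => 0
  | 1 => 1
  | n + 2 =>
    if (n + 2) % 2 = 0 then X * sternP (n / 2 + 1)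
    else sternP (n / 2 + 1) + sternP (n / 2 + 2)
decreasing_by all_goals omega

/-- The digits of a BSD representation lie in {-1, 0, 1}. -/
def IsBSDDigits {i : ℕ} (b : Fin i → ℤ) : Prop := ∀ j, b j ∈ ({-1, 0, 1} : Set ℤ)

/-- The value represented by the digit string `b` (least significant digit `b 0`). -/
def bsdVal {i : ℕ} (b : Fin i → ℤ) : ℤ := ∑ j : Fin i, b j * 2 ^ (j : ℕ)

/-- `b` is a (not necessarily reduced) non-adjacent form digit string of length `k`:
digits in {-1,0,1}, no two adjacent digits both nonzero, and nonzero leading digit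
(when `k > 0`). -/
def IsReducedNAF {k : ℕ} (b : Fin k → ℤ) : Prop :=
  IsBSDDigits b ∧
  (∀ j : Fin k, ∀ h : (j : ℕ) + 1 < k, b j = 0 ∨ b ⟨(j : ℕ) + 1, h⟩ = 0) ∧
  (∀ h : 0 < k, b ⟨k - 1, Nat.sub_lt h one_pos⟩ ≠ 0)

/-- `m` has a reduced NAF representation of bitlength `k`. -/
def HasNAFLen (m : ℤ) (k : ℕ) : Prop :=
  ∃ b : Fin k → ℤ, IsReducedNAF b ∧ bsdVal b = m

/-- `I k`: the set of positive integers of NAF-bitlength `k`. -/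
def NAFInterval (k : ℕ) : Set ℕ := {n : ℕ | HasNAFLen (n : ℤ) k}

/-- `a k = min I k`: `a 1 = 1`, `a 2 = 2`, `a k = 2^(k-2) + a (k-2)`. -/
def aseq : ℕ → ℕ
  | 0 => 0
  | 1 => 1
  | 2 => 2
  | k + 3 => 2 ^ (k + 1) + aseq (k + 1)

/-- The NAF-bitlength of `n`. -/
noncomputable def nafLen (n : ℕ) : ℕ := sInf {k : ℕ | HasNAFLen (n : ℤ) k}

/-- The minimal Hamming weight of a BSD representation of `n` of length
equal to its NAF-bitlength. -/
noncomputable def minWeight (n : ℕ) : ℕ :=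
  sInf {w : ℕ | ∃ b : Fin (nafLen n) → ℤ,
    IsBSDDigits b ∧ bsdVal b = (n : ℤ) ∧ {j | b j ≠ 0}.ncard = w}

/-- `Z n`: the number of zeros in an optimal (minimal-weight) BSD representation of `n`
of length equal to its NAF-bitlength. -/
noncomputable def Zfun (n : ℕ) : ℕ := nafLen n - minWeight n

/-- `M n`: the number of optimal (minimal-weight) BSD representations of `n`
of length equal to its NAF-bitlength. -/
noncomputable def Mfun (n : ℕ) : ℕ :=
  {b : Fin (nafLen n) → ℤ |
    IsBSDDigits b ∧ bsdVal b = (n : ℤ) ∧ {j | b j ≠ 0}.ncard = minWeight n}.ncard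

section Aux
open Polynomial

lemma sternP_even (n : ℕ) (hn : 1 ≤ n) : sternP (2 * n) = X * sternP n := by
  obtain ⟨m, rfl⟩ : ∃ m, n = m + 1 := ⟨n - 1, by omega⟩
  show sternP (2 * m + 2) = _
  rw [sternP]
  have h1 : (2 * m) / 2 + 1 = m + 1 := by omega
  simp [h1, Nat.mul_add_mod]

lemma sternP_odd (n : ℕ) (hn : 1 ≤ n) : sternP (2 * n + 1) = sternP n + sternP (n + 1) := by
  obtain ⟨m, rfl⟩ : ∃ m, n = m + 1 := ⟨n - 1, by omega⟩
  show sternP (2 * m + 1 + 2) = _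
  rw [sternP]
  have h1 : (2 * m + 1) / 2 + 1 = m + 1 := by omega
  have h2 : (2 * m + 1) / 2 + 2 = m + 2 := by omega
  have h3 : (2 * m + 1 + 2) % 2 = 1 := by omega
  simp [h1, h2, h3]

lemma add_ne_zero_poly {p q : Polynomial ℕ} (hp : p ≠ 0) : p + q ≠ 0 := by
  intro h
  apply hp
  ext i
  have := congrArg (fun r => Polynomial.coeff r i) h
  simp [coeff_add] at this
  simp [this.1]

lemma sternP_ne_zero : ∀ n, 1 ≤ n → sternP n ≠ 0 := by
  intro n
  induction n using Nat.strong_induction_on with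
  | _ n ih =>
    intro hn
    match n, hn with
    | 1, _ => simp [sternP]
    | (m+2), _ =>
      rcases Nat.even_or_odd (m+2) with ⟨v, hv⟩ | ⟨v, hv⟩
      · have hv1 : 1 ≤ v := by omega
        rw [show m + 2 = 2 * v by omega, sternP_even v hv1]
        exact mul_ne_zero X_ne_zero (ih v (by omega) hv1)
      · have hv1 : 1 ≤ v := by omega
        rw [show m + 2 = 2 * v + 1 by omega, sternP_odd v hv1]
        exact add_ne_zero_poly (ih v (by omega) hv1)

noncomputable def dS (n : ℕ) : ℕ := (sternP n).natDegree

lemma dS_even (n : ℕ) (hn : 1 ≤ n) : dS (2 * n) = dS n + 1 := by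
  unfold dS
  rw [sternP_even n hn, natDegree_mul X_ne_zero (sternP_ne_zero n hn), natDegree_X]
  omega

lemma natDegree_add_max (p q : Polynomial ℕ) (hp : p ≠ 0) (hq : q ≠ 0) :
    (p + q).natDegree = max p.natDegree q.natDegree := by
  refine le_antisymm (natDegree_add_le p q) ?_
  apply le_natDegree_of_ne_zero
  rw [coeff_add]
  rcases le_or_gt p.natDegree q.natDegree with h | h
  · rcases eq_or_lt_of_le h with h' | h'
    · have h1 : p.coeff (max p.natDegree q.natDegree) ≠ 0 := by
        rw [max_eq_right h, ← h']
        have := leadingCoeff_ne_zero.mpr hp; rwa [leadingCoeff] at this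
      omega
    · have h1 : q.coeff (max p.natDegree q.natDegree) ≠ 0 := by
        rw [max_eq_right h]
        have := leadingCoeff_ne_zero.mpr hq; rwa [leadingCoeff] at this
      omega
  · have h1 : p.coeff (max p.natDegree q.natDegree) ≠ 0 := by
      rw [max_eq_left h.le]
      have := leadingCoeff_ne_zero.mpr hp; rwa [leadingCoeff] at this
    omega

lemma dS_odd (n : ℕ) (hn : 1 ≤ n) : dS (2 * n + 1) = max (dS n) (dS (n + 1)) := by
  unfold dS
  rw [sternP_odd n hn, natDegree_add_max _ _ (sternP_ne_zero n hn) (sternP_ne_zero (n+1) (by omega))]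

lemma dS1 : dS 1 = 0 := by unfold dS; simp [sternP]
lemma dS2 : dS 2 = 1 := by have := dS_even 1 le_rfl; rw [dS1] at this; simpa using this
lemma dS3 : dS 3 = 1 := by
  have := dS_odd 1 le_rfl; rw [dS1, dS2] at this; simpa using this
lemma dS4 : dS 4 = 2 := by have := dS_even 2 (by norm_num); rw [dS2] at this; simpa using this
lemma dS5 : dS 5 = 1 := by
  have := dS_odd 2 (by norm_num); rw [dS2, dS3] at this; simpa using this
lemma dS6 : dS 6 = 2 := by have := dS_even 3 (by norm_num); rw [dS3] at this; simpa using this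
lemma dS7 : dS 7 = 2 := by
  have := dS_odd 3 (by norm_num); rw [dS3, dS4] at this; simpa using this
lemma dS8 : dS 8 = 3 := by have := dS_even 4 (by norm_num); rw [dS4] at this; simpa using this
lemma dS9 : dS 9 = 2 := by
  have := dS_odd 4 (by norm_num); rw [dS4, dS5] at this; simpa using this
lemma dS10 : dS 10 = 2 := by have := dS_even 5 (by norm_num); rw [dS5] at this; simpa using this

lemma aseq_rec (m : ℕ) : aseq (m + 3) = 2 ^ (m + 1) + aseq (m + 1) := by rfl

lemma aseq_closed : ∀ m, 1 ≤ m → 3 * aseq m = 2 ^ m + 2 - m % 2 := by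
  intro m
  induction m using Nat.strong_induction_on with
  | _ m ih =>
    intro hm
    match m, hm with
    | 1, _ => simp [aseq]
    | 2, _ => simp [aseq]
    | (n+3), _ =>
      have h1 := ih (n+1) (by omega) (by omega)
      rw [aseq_rec]
      have h2 : 2 ^ (n + 3) = 4 * 2 ^ (n + 1) := by ring
      have h3 : (n + 3) % 2 = (n + 1) % 2 := by omega
      have h4 : 2 ^ (n + 1) ≥ 2 := Nat.one_lt_two_pow (by omega)
      omega

lemma dS_aseq : ∀ m, 2 ≤ m → dS (aseq m) = m / 2 ∧ dS (aseq m - 1) = (m - 1) / 2 := by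
  intro m hm
  induction m, hm using Nat.le_induction with
  | base =>
    constructor
    · rw [show aseq 2 = 2 from rfl, dS2]
    · rw [show aseq 2 - 1 = 1 from rfl, dS1]
  | succ m hm ih =>
    obtain ⟨ih1, ih2⟩ := ih
    have hcm := aseq_closed m (by omega)
    have hcm1 := aseq_closed (m + 1) (by omega)
    have hp : 2 ^ (m + 1) = 2 * 2 ^ m := by ring
    have hp2 : 4 ≤ 2 ^ m := by
      calc 4 = 2 ^ 2 := rfl
      _ ≤ 2 ^ m := Nat.pow_le_pow_right (by norm_num) hm
    have ham : 2 ≤ aseq m := by omega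
    rcases Nat.even_or_odd m with hme | hmo
    · have h0 : m % 2 = 0 := Nat.even_iff.mp hme
      have e1 : aseq (m + 1) = 2 * (aseq m - 1) + 1 := by omega
      have e2 : aseq (m + 1) - 1 = 2 * (aseq m - 1) := by omega
      constructor
      · rw [e1, dS_odd _ (by omega), show aseq m - 1 + 1 = aseq m from by omega, ih1, ih2]
        omega
      · rw [e2, dS_even _ (by omega), ih2]
        omega
    · have h0 : m % 2 = 1 := Nat.odd_iff.mp hmo
      have e1 : aseq (m + 1) = 2 * aseq m := by omega
      have e2 : aseq (m + 1) - 1 = 2 * (aseq m - 1) + 1 := by omega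
      constructor
      · rw [e1, dS_even _ (by omega), ih1]
        omega
      · rw [e2, dS_odd _ (by omega), show aseq m - 1 + 1 = aseq m from by omega, ih1, ih2]
        omega

lemma lemA : ∀ j, 2 ≤ j → ∀ w, w ≤ aseq (j + 1) →
    dS (2 ^ (j + 1) - w) = dS (2 ^ j - w) + 1 := by
  intro j hj
  induction j, hj using Nat.le_induction with
  | base =>
    intro w hw
    replace hw : w ≤ 3 := hw
    interval_cases w <;> norm_num [dS1, dS2, dS3, dS4, dS5, dS6, dS7, dS8]
  | succ j hj ih =>
    intro w hw
    replace hw : w ≤ aseq (j + 2) := hw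
    have hcj := aseq_closed j (by omega)
    have hcj1 := aseq_closed (j + 1) (by omega)
    have hcj2 := aseq_closed (j + 2) (by omega)
    have hp1 : 2 ^ (j + 1) = 2 * 2 ^ j := by ring
    have hp2 : 2 ^ (j + 2) = 4 * 2 ^ j := by ring
    have hp4 : 4 ≤ 2 ^ j := by
      calc 4 = 2 ^ 2 := rfl
      _ ≤ 2 ^ j := Nat.pow_le_pow_right (by norm_num) hj
    rcases Nat.even_or_odd w with ⟨v, hv⟩ | ⟨v, hv⟩
    · have hvle : v ≤ aseq (j + 1) := by omega
      rw [show 2 ^ (j + 2) - w = 2 * (2 ^ (j + 1) - v) from by omega,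
        dS_even _ (by omega), ih v hvle,
        show 2 ^ (j + 1) - w = 2 * (2 ^ j - v) from by omega,
        dS_even _ (by omega)]
    · have hvle : v + 1 ≤ aseq (j + 1) := by omega
      rw [show 2 ^ (j + 2) - w = 2 * (2 ^ (j + 1) - (v + 1)) + 1 from by omega,
        dS_odd _ (by omega), show 2 ^ (j + 1) - (v + 1) + 1 = 2 ^ (j + 1) - v from by omega,
        ih (v + 1) hvle, ih v (by omega),
        show 2 ^ (j + 1) - w = 2 * (2 ^ j - (v + 1)) + 1 from by omega,
        dS_odd _ (by omega), show 2 ^ j - (v + 1) + 1 = 2 ^ j - v from by omega]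
      omega

lemma lemB : ∀ j, 2 ≤ j → ∀ w, w + 1 ≤ aseq (j + 1) →
    dS (2 ^ (j + 1) + w) = dS (2 ^ j - w) + 1 := by
  intro j hj
  induction j, hj using Nat.le_induction with
  | base =>
    intro w hw
    replace hw : w + 1 ≤ 3 := hw
    have hw2 : w ≤ 2 := by omega
    interval_cases w <;> norm_num [dS1, dS2, dS3, dS4, dS8, dS9, dS10]
  | succ j hj ih =>
    intro w hw
    replace hw : w + 1 ≤ aseq (j + 2) := hw
    have hcj := aseq_closed j (by omega)
    have hcj1 := aseq_closed (j + 1) (by omega)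
    have hcj2 := aseq_closed (j + 2) (by omega)
    have hp1 : 2 ^ (j + 1) = 2 * 2 ^ j := by ring
    have hp2 : 2 ^ (j + 2) = 4 * 2 ^ j := by ring
    have hp4 : 4 ≤ 2 ^ j := by
      calc 4 = 2 ^ 2 := rfl
      _ ≤ 2 ^ j := Nat.pow_le_pow_right (by norm_num) hj
    rcases Nat.even_or_odd w with ⟨v, hv⟩ | ⟨v, hv⟩
    · have hvle : v + 1 ≤ aseq (j + 1) := by omega
      rw [show 2 ^ (j + 2) + w = 2 * (2 ^ (j + 1) + v) from by omega,
        dS_even _ (by omega), ih v hvle,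
        show 2 ^ (j + 1) - w = 2 * (2 ^ j - v) from by omega,
        dS_even _ (by omega)]
    · rcases Nat.lt_or_ge (v + 1) (aseq (j + 1)) with hbd | hbd
      · -- generic odd case : v + 2 ≤ aseq (j+1), so both v, v+1 usable
        rw [show 2 ^ (j + 2) + w = 2 * (2 ^ (j + 1) + v) + 1 from by omega,
          dS_odd _ (by omega), show 2 ^ (j + 1) + v + 1 = 2 ^ (j + 1) + (v + 1) from by omega,
          ih v (by omega), ih (v + 1) (by omega),
          show 2 ^ (j + 1) - w = 2 * (2 ^ j - (v + 1)) + 1 from by omega,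
          dS_odd _ (by omega), show 2 ^ j - (v + 1) + 1 = 2 ^ j - v from by omega]
        omega
      · -- boundary: v + 1 = aseq (j+1), forces j even
        have hveq : v + 1 = aseq (j + 1) := by omega
        have hj0 : j % 2 = 0 := by omega
        have hrec : aseq (j + 3) = 2 ^ (j + 1) + aseq (j + 1) := aseq_rec j
        have hd3 := dS_aseq (j + 3) (by omega)
        have hdj := dS_aseq j hj
        have haj : 2 ≤ aseq j := by omega
        have hsum : aseq j + aseq (j + 1) = 2 ^ j + 1 := by omega
        rw [show 2 ^ (j + 2) + w = 2 * (2 ^ (j + 1) + v) + 1 from by omega,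
          dS_odd _ (by omega),
          show 2 ^ (j + 1) + v = aseq (j + 3) - 1 from by omega,
          show aseq (j + 3) - 1 + 1 = aseq (j + 3) from by omega,
          hd3.1, hd3.2,
          show 2 ^ (j + 1) - w = 2 * (aseq j - 1) + 1 from by omega,
          dS_odd _ (by omega),
          show aseq j - 1 + 1 = aseq j from by omega,
          hdj.1, hdj.2]
        omega

end Aux
theorem stern_deg_B (k u : ℕ) (hk : 3 ≤ k)
    (hu : u ≤ 2 ^ (k - 1) - (2 ^ (k - 1) - aseq (k - 2) + 1)) :
    (sternP (2 ^ (k - 1) - aseq (k - 2) + 1 + u)).natDegree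
      = (sternP (aseq (k - 1) + u)).natDegree + 1 ∧
    (sternP (2 ^ k - (2 ^ (k - 1) - aseq (k - 2) + 1 + u))).natDegree
      = (sternP (aseq (k - 1) + u)).natDegree + 1 := by
  obtain ⟨j, rfl⟩ : ∃ j, k = j + 2 := ⟨k - 2, by omega⟩
  have h1 : j + 2 - 1 = j + 1 := rfl
  have h2 : j + 2 - 2 = j := rfl
  rw [h1, h2] at hu ⊢
  rcases Nat.lt_or_ge j 2 with hj | hj
  · have hj1 : j = 1 := by omega
    subst hj1
    have ha1 : aseq 1 = 1 := rfl
    rw [ha1] at hu ⊢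
    norm_num at hu
    subst hu
    have ha2 : aseq 2 = 2 := rfl
    rw [ha2]
    norm_num
    show dS 4 = dS 2 + 1
    rw [dS4, dS2]
  · have hcj := aseq_closed j (by omega)
    have hcj1 := aseq_closed (j + 1) (by omega)
    have hp1 : 2 ^ (j + 1) = 2 * 2 ^ j := by ring
    have hp2 : 2 ^ (j + 2) = 4 * 2 ^ j := by ring
    have hp4 : 4 ≤ 2 ^ j := by
      calc 4 = 2 ^ 2 := rfl
      _ ≤ 2 ^ j := Nat.pow_le_pow_right (by norm_num) hj
    have hA := lemA j hj (aseq j - 1 - u) (by omega)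
    have hB := lemB j hj (aseq j - 1 - u) (by omega)
    have e1 : 2 ^ (j + 1) - aseq j + 1 + u = 2 ^ (j + 1) - (aseq j - 1 - u) := by omega
    have e2 : aseq (j + 1) + u = 2 ^ j - (aseq j - 1 - u) := by omega
    have e3 : 2 ^ (j + 2) - (2 ^ (j + 1) - aseq j + 1 + u)
        = 2 ^ (j + 1) + (aseq j - 1 - u) := by omega
    constructor
    · show dS _ = dS _ + 1
      rw [e1, e2]
      exact hA
    · show dS _ = dS _ + 1
      rw [e3, e2]
      exact hB
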